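/- arXiv:2312.07749 — 7 statements merged into one kernel-verified Lean document; each statement's English description precedes it below -/
import Mathlib

section
/- Let X be a topological space, S an exceedingly rich family of closed subspaces of X, and φ the function constructed by closing off under: (i) for each x ∈ X a chosen separable F_x ∈ S containing x, (ii) for each pair of separable G, H ∈ S a chosen separable F_{G,H} ∈ S containing G ∪ H, and (iii) chosen countable dense subsets D_F of each separable F ∈ S. Then φ is a Skolem-like function and {closure(φ(C)) : C ⊆ X} ⊆ S. -/
open Cardinal TopologicalSpace

variable {X : Type*} [TopologicalSpace X]

/-- The density character of a subset `A`. -/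
noncomputable def dens (A : Set X) : Cardinal :=
  sInf {c : Cardinal | ∃ D : Set X, D ⊆ A ∧ A ⊆ closure D ∧ Cardinal.mk D = c}

/-- Exceedingly rich family of closed subspaces. -/
def ExceedinglyRich (S : Set (Set X)) : Prop :=
  (∀ F ∈ S, IsClosed F) ∧
  (∀ Y : Set X, ∃ F ∈ S, Y ⊆ F ∧ dens F = max (dens Y) Cardinal.aleph0) ∧
  (∀ A : Set (Set X), A ⊆ S → A.Nonempty → DirectedOn (· ⊆ ·) A → closure (⋃₀ A) ∈ S)

/-- Skolem-like function on the power set of `I`. -/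
def SkolemLike {I : Type*} (φ : Set I → Set I) : Prop :=
  (∀ A : Set I, A ⊆ φ A ∧ Cardinal.mk (φ A) = max (Cardinal.mk A) Cardinal.aleph0) ∧
  (∀ A B : Set I, A ⊆ B → φ A ⊆ φ B) ∧
  (∀ 𝒜 : Set (Set I), 𝒜.Nonempty → DirectedOn (· ⊆ ·) 𝒜 →
    φ (⋃₀ 𝒜) = ⋃ A ∈ 𝒜, φ A)

/-- The auxiliary families `ψ_k(C)`: start with the chosen separable members `F_x`, `x ∈ C ∪ Z`,
and close off under the pairing operation `(G, H) ↦ F_{G,H}` for separable members of `S`. -/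
def psiN (S : Set (Set X)) (Fx : X → Set X) (FGH : Set X → Set X → Set X) (Z : Set X)
    (C : Set X) : ℕ → Set (Set X)
  | 0 => Fx '' (C ∪ Z)
  | (k + 1) => psiN S Fx FGH Z C k ∪
      {F | ∃ G ∈ psiN S Fx FGH Z C k, ∃ H ∈ psiN S Fx FGH Z C k,
        G ∈ S ∧ H ∈ S ∧ IsSeparable G ∧ IsSeparable H ∧ F = FGH G H}

/-- `ψ(C) = ⋃ₖ ψ_k(C)`. -/
def psi (S : Set (Set X)) (Fx : X → Set X) (FGH : Set X → Set X → Set X) (Z : Set X)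
    (C : Set X) : Set (Set X) :=
  ⋃ k, psiN S Fx FGH Z C k

/-- The function `φ(C) = Z ∪ C ∪ ⋃ {D_F : F ∈ ψ(C) separable}`. -/
def phiCon (S : Set (Set X)) (Fx : X → Set X) (FGH : Set X → Set X → Set X)
    (DF : Set X → Set X) (Z : Set X) (C : Set X) : Set X :=
  Z ∪ C ∪ ⋃ F ∈ {F ∈ psi S Fx FGH Z C | IsSeparable F}, DF F

section Aux

variable {S : Set (Set X)} {Fx : X → Set X} {FGH : Set X → Set X → Set X} {Z : Set X}

lemma psiN_mono_k {C : Set X} : Monotone (psiN S Fx FGH Z C) := by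
  apply monotone_nat_of_le_succ
  intro k
  exact Set.subset_union_left

lemma psiN_mono_C {C C' : Set X} (h : C ⊆ C') (k : ℕ) :
    psiN S Fx FGH Z C k ⊆ psiN S Fx FGH Z C' k := by
  induction k with
  | zero => exact Set.image_mono (Set.union_subset_union_left Z h)
  | succ k ih =>
      apply Set.union_subset_union ih
      rintro F ⟨G, hG, H, hH, h1, h2, h3, h4, h5⟩
      exact ⟨G, ih hG, H, ih hH, h1, h2, h3, h4, h5⟩

lemma psiN_mem (hFx : ∀ x : X, Fx x ∈ S ∧ x ∈ Fx x ∧ IsSeparable (Fx x))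
    (hFGH : ∀ G H : Set X, G ∈ S → H ∈ S → IsSeparable G → IsSeparable H →
      FGH G H ∈ S ∧ IsSeparable (FGH G H) ∧ G ∪ H ⊆ FGH G H)
    {C : Set X} {k : ℕ} {F : Set X} (hF : F ∈ psiN S Fx FGH Z C k) :
    F ∈ S ∧ IsSeparable F := by
  induction k with
  | zero =>
      obtain ⟨x, -, rfl⟩ := hF
      exact ⟨(hFx x).1, (hFx x).2.2⟩
  | succ k ih =>
      rcases hF with hF | ⟨G, hG, H, hH, h1, h2, h3, h4, rfl⟩
      · exact ih hF
      · exact ⟨(hFGH G H h1 h2 h3 h4).1, (hFGH G H h1 h2 h3 h4).2.1⟩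

lemma psi_mem (hFx : ∀ x : X, Fx x ∈ S ∧ x ∈ Fx x ∧ IsSeparable (Fx x))
    (hFGH : ∀ G H : Set X, G ∈ S → H ∈ S → IsSeparable G → IsSeparable H →
      FGH G H ∈ S ∧ IsSeparable (FGH G H) ∧ G ∪ H ⊆ FGH G H)
    {C : Set X} {F : Set X} (hF : F ∈ psi S Fx FGH Z C) :
    F ∈ S ∧ IsSeparable F := by
  obtain ⟨_, ⟨k, rfl⟩, hk⟩ := hF
  exact psiN_mem hFx hFGH hk

lemma psiN_card (hZc : Z.Countable) (C : Set X) (k : ℕ) :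
    #(psiN S Fx FGH Z C k) ≤ max #C ℵ₀ := by
  have hκ : ℵ₀ ≤ max #C ℵ₀ := le_max_right _ _
  induction k with
  | zero =>
      refine mk_image_le.trans ((mk_union_le _ _).trans ?_)
      exact Cardinal.add_le_of_le hκ (le_max_left _ _)
        ((Cardinal.mk_le_aleph0_iff.2 hZc).trans hκ)
  | succ k ih =>
      refine (mk_union_le _ _).trans (Cardinal.add_le_of_le hκ ih ?_)
      have hsub : {F | ∃ G ∈ psiN S Fx FGH Z C k, ∃ H ∈ psiN S Fx FGH Z C k,
          G ∈ S ∧ H ∈ S ∧ IsSeparable G ∧ IsSeparable H ∧ F = FGH G H} ⊆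
          Set.image2 FGH (psiN S Fx FGH Z C k) (psiN S Fx FGH Z C k) := by
        rintro F ⟨G, hG, H, hH, -, -, -, -, rfl⟩
        exact Set.mem_image2_of_mem hG hH
      refine (mk_le_mk_of_subset hsub).trans (Cardinal.mk_image2_le.trans ?_)
      calc #(psiN S Fx FGH Z C k) * #(psiN S Fx FGH Z C k)
          ≤ max #C ℵ₀ * max #C ℵ₀ := mul_le_mul' ih ih
        _ = max #C ℵ₀ := Cardinal.mul_eq_self hκ

lemma psi_card (hZc : Z.Countable) (C : Set X) :
    #(psi S Fx FGH Z C) ≤ max #C ℵ₀ := by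
  have hκ : ℵ₀ ≤ max #C ℵ₀ := le_max_right _ _
  have : psi S Fx FGH Z C = ⋃ k : ULift.{_} ℕ, psiN S Fx FGH Z C k.down :=
    (ULift.down_surjective.iUnion_comp _).symm
  rw [this]
  refine (mk_iUnion_le _).trans ?_
  calc #(ULift ℕ) * ⨆ k : ULift ℕ, #(psiN S Fx FGH Z C k.down)
      ≤ max #C ℵ₀ * max #C ℵ₀ := by
        refine mul_le_mul' (mk_le_aleph0.trans hκ) (ciSup_le' fun k => psiN_card hZc C k.down)
    _ = max #C ℵ₀ := Cardinal.mul_eq_self hκ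

lemma psiN_dir {𝒜 : Set (Set X)} (hne : 𝒜.Nonempty) (hdir : DirectedOn (· ⊆ ·) 𝒜)
    (k : ℕ) {F : Set X} (hF : F ∈ psiN S Fx FGH Z (⋃₀ 𝒜) k) :
    ∃ A ∈ 𝒜, F ∈ psiN S Fx FGH Z A k := by
  induction k generalizing F with
  | zero =>
      obtain ⟨x, hx | hx, rfl⟩ := hF
      · obtain ⟨A, hA, hxA⟩ := hx
        exact ⟨A, hA, Set.mem_image_of_mem _ (Or.inl hxA)⟩
      · obtain ⟨A, hA⟩ := hne
        exact ⟨A, hA, Set.mem_image_of_mem _ (Or.inr hx)⟩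
  | succ k ih =>
      rcases hF with hF | ⟨G, hG, H, hH, h1, h2, h3, h4, rfl⟩
      · obtain ⟨A, hA, hFA⟩ := ih hF
        exact ⟨A, hA, Or.inl hFA⟩
      · obtain ⟨A1, hA1, hGA⟩ := ih hG
        obtain ⟨A2, hA2, hHA⟩ := ih hH
        obtain ⟨A, hA, h12, h22⟩ := hdir A1 hA1 A2 hA2
        exact ⟨A, hA, Or.inr ⟨G, psiN_mono_C h12 k hGA, H, psiN_mono_C h22 k hHA,
          h1, h2, h3, h4, rfl⟩⟩

lemma psi_directed
    (hFx : ∀ x : X, Fx x ∈ S ∧ x ∈ Fx x ∧ IsSeparable (Fx x))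
    (hFGH : ∀ G H : Set X, G ∈ S → H ∈ S → IsSeparable G → IsSeparable H →
      FGH G H ∈ S ∧ IsSeparable (FGH G H) ∧ G ∪ H ⊆ FGH G H)
    (C : Set X) : DirectedOn (· ⊆ ·) (psi S Fx FGH Z C) := by
  rintro F ⟨_, ⟨k, rfl⟩, hFk⟩ G ⟨_, ⟨l, rfl⟩, hGl⟩
  have hFm : F ∈ psiN S Fx FGH Z C (max k l) := psiN_mono_k (le_max_left k l) hFk
  have hGm : G ∈ psiN S Fx FGH Z C (max k l) := psiN_mono_k (le_max_right k l) hGl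
  obtain ⟨hFS, hFsep⟩ := psiN_mem hFx hFGH hFm
  obtain ⟨hGS, hGsep⟩ := psiN_mem hFx hFGH hGm
  refine ⟨FGH F G, Set.mem_iUnion.2 ⟨max k l + 1,
    Or.inr ⟨F, hFm, G, hGm, hFS, hGS, hFsep, hGsep, rfl⟩⟩, ?_, ?_⟩
  · exact (Set.union_subset_iff.1 (hFGH F G hFS hGS hFsep hGsep).2.2).1
  · exact (Set.union_subset_iff.1 (hFGH F G hFS hGS hFsep hGsep).2.2).2

end Aux

/-- Given an exceedingly rich family `S` and choices: `F_x ∈ S` separable containing `x`,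
`F_{G,H} ∈ S` separable containing `G ∪ H` for separable `G, H ∈ S`, and countable dense
subsets `D_F ⊆ F` for separable `F ∈ S`, the function `φ` obtained by closing off is
Skolem-like and `{closure (φ C) : C ⊆ X} ⊆ S`. -/
theorem phiCon_skolemLike_and_subset (S : Set (Set X)) (hS : ExceedinglyRich S)
    (Fx : X → Set X) (hFx : ∀ x : X, Fx x ∈ S ∧ x ∈ Fx x ∧ IsSeparable (Fx x))
    (FGH : Set X → Set X → Set X)
    (hFGH : ∀ G H : Set X, G ∈ S → H ∈ S → IsSeparable G → IsSeparable H →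
      FGH G H ∈ S ∧ IsSeparable (FGH G H) ∧ G ∪ H ⊆ FGH G H)
    (DF : Set X → Set X)
    (hDF : ∀ F : Set X, F ∈ S → IsSeparable F →
      DF F ⊆ F ∧ (DF F).Countable ∧ F ⊆ closure (DF F))
    (Z : Set X) (hZc : Z.Countable) (hZi : Z.Infinite) :
    SkolemLike (phiCon S Fx FGH DF Z) ∧
      {F : Set X | ∃ C : Set X, F = closure (phiCon S Fx FGH DF Z C)} ⊆ S := by
  obtain ⟨z0, hz0⟩ := hZi.nonempty
  have hCsub : ∀ C : Set X, C ⊆ phiCon S Fx FGH DF Z C := fun C =>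
    (Set.subset_union_right).trans Set.subset_union_left
  have hZsub : ∀ C : Set X, Z ⊆ phiCon S Fx FGH DF Z C := fun C =>
    (Set.subset_union_left).trans Set.subset_union_left
  -- upper cardinality bound
  have hcard : ∀ C : Set X, #(phiCon S Fx FGH DF Z C) = max #C ℵ₀ := by
    intro C
    have hκ : ℵ₀ ≤ max #C ℵ₀ := le_max_right _ _
    refine le_antisymm ?_ ?_
    · refine (mk_union_le _ _).trans (Cardinal.add_le_of_le hκ ?_ ?_)
      · exact (mk_union_le _ _).trans (Cardinal.add_le_of_le hκ
          ((Cardinal.mk_le_aleph0_iff.2 hZc).trans hκ) (le_max_left _ _))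
      · refine (mk_biUnion_le _ _).trans ?_
        have h1 : #({F ∈ psi S Fx FGH Z C | IsSeparable F} : Set (Set X)) ≤ max #C ℵ₀ :=
          (mk_le_mk_of_subset (Set.sep_subset _ _)).trans (psi_card hZc C)
        have h2 : (⨆ F : {F ∈ psi S Fx FGH Z C | IsSeparable F}, #(DF F.1)) ≤ ℵ₀ := by
          refine ciSup_le' fun F => Cardinal.mk_le_aleph0_iff.2 ?_
          obtain ⟨hmem, hsep⟩ := F.2
          exact (hDF F.1 (psi_mem hFx hFGH hmem).1 hsep).2.1
        calc _ ≤ max #C ℵ₀ * max #C ℵ₀ := mul_le_mul' h1 (h2.trans hκ)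
          _ = max #C ℵ₀ := Cardinal.mul_eq_self hκ
    · refine max_le (mk_le_mk_of_subset (hCsub C)) ?_
      rw [Cardinal.aleph0_le_mk_iff]
      exact Set.infinite_coe_iff.2 (hZi.mono (hZsub C))
  -- monotonicity
  have hmono : ∀ C C' : Set X, C ⊆ C' →
      phiCon S Fx FGH DF Z C ⊆ phiCon S Fx FGH DF Z C' := by
    intro C C' h
    refine Set.union_subset_union (Set.union_subset_union_right Z h) ?_
    refine Set.iUnion₂_subset fun F hF => ?_
    obtain ⟨⟨_, ⟨k, rfl⟩, hk⟩, hsep⟩ := hF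
    exact Set.subset_biUnion_of_mem (u := DF)
      ⟨Set.mem_iUnion.2 ⟨k, psiN_mono_C h k hk⟩, hsep⟩
  refine ⟨⟨fun C => ⟨hCsub C, hcard C⟩, fun C C' h => hmono C C' h, ?_⟩, ?_⟩
  · -- directed unions
    intro 𝒜 hne hdir
    refine le_antisymm ?_ ?_
    · rintro x ((hx | hx) | hx)
      · obtain ⟨A, hA⟩ := hne
        exact Set.mem_biUnion hA (hZsub A hx)
      · obtain ⟨A, hA, hxA⟩ := hx
        exact Set.mem_biUnion hA (hCsub A hxA)
      · obtain ⟨_, ⟨F, rfl⟩, _, ⟨⟨⟨_, ⟨k, rfl⟩, hk⟩, hsep⟩, rfl⟩, hx⟩ := hx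
        obtain ⟨A, hA, hFA⟩ := psiN_dir hne hdir k hk
        refine Set.mem_biUnion hA (Set.mem_union_right _ ?_)
        exact Set.mem_biUnion ⟨Set.mem_iUnion.2 ⟨k, hFA⟩, hsep⟩ hx
    · refine Set.iUnion₂_subset fun A hA => hmono A _ ?_
      exact fun x hx => ⟨A, hA, hx⟩
  · -- closures belong to S
    rintro F ⟨C, rfl⟩
    have hpsiS : psi S Fx FGH Z C ⊆ S := fun G hG => (psi_mem hFx hFGH hG).1
    have hpsine : (psi S Fx FGH Z C).Nonempty :=
      ⟨Fx z0, Set.mem_iUnion.2 ⟨0, Set.mem_image_of_mem _ (Or.inr hz0)⟩⟩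
    have hcl : closure (⋃₀ psi S Fx FGH Z C) ∈ S :=
      hS.2.2 _ hpsiS hpsine (psi_directed hFx hFGH C)
    have h1 : phiCon S Fx FGH DF Z C ⊆ ⋃₀ psi S Fx FGH Z C := by
      rintro x ((hx | hx) | hx)
      · exact ⟨Fx x, Set.mem_iUnion.2 ⟨0, Set.mem_image_of_mem _ (Or.inr hx)⟩, (hFx x).2.1⟩
      · exact ⟨Fx x, Set.mem_iUnion.2 ⟨0, Set.mem_image_of_mem _ (Or.inl hx)⟩, (hFx x).2.1⟩
      · obtain ⟨_, ⟨G, rfl⟩, _, ⟨⟨hG, hsep⟩, rfl⟩, hx⟩ := hx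
        exact ⟨G, hG, (hDF G (psi_mem hFx hFGH hG).1 hsep).1 hx⟩
    have h2 : ⋃₀ psi S Fx FGH Z C ⊆ closure (phiCon S Fx FGH DF Z C) := by
      rintro x ⟨G, hG, hx⟩
      obtain ⟨hGS, hGsep⟩ := psi_mem hFx hFGH hG
      have hDsub : DF G ⊆ phiCon S Fx FGH DF Z C :=
        fun y hy => Set.mem_union_right _ (Set.mem_biUnion ⟨hG, hGsep⟩ hy)
      exact closure_mono hDsub ((hDF G hGS hGsep).2.2 hx)
    have heq : closure (phiCon S Fx FGH DF Z C) = closure (⋃₀ psi S Fx FGH Z C) :=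
      le_antisymm (closure_mono h1) (closure_minimal h2 isClosed_closure)
    rw [heq]
    exact hcl
end

section
/- If X is a topological space and S is an exceedingly rich family of closed subspaces of X, then there exists a subfamily S₀ ⊆ S that is large in the sense of Skolem-like functions. -/
open Cardinal

variable {X : Type*} [TopologicalSpace X]

/-! ### Auxiliary construction -/

/-- Iteration of a "hull" operator `g` along finite sets. -/
noncomputable def skolemT (g : Set X → Set X) : ℕ → Finset X → Set X
  | 0, F => ↑F
  | n + 1, F => ⋃ F' ∈ F.powerset, g (skolemT g n F')

/-- The Skolem-like function associated to a hull operator `g`. -/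
noncomputable def skolemPhi (g : Set X → Set X) (C : Set X) : Set X :=
  ⋃ i : {F : Finset X // ↑F ⊆ C}, ⋃ n : ℕ, skolemT g n i.1

section AuxLemmas

variable {g : Set X → Set X}

lemma skolemT_countable (hg2 : ∀ Y : Set X, Y.Countable → (g Y).Countable) :
    ∀ (n : ℕ) (F : Finset X), (skolemT g n F).Countable := by
  intro n
  induction n with
  | zero => intro F; exact F.countable_toSet
  | succ n ih =>
      intro F
      show (⋃ F' ∈ F.powerset, g (skolemT g n F')).Countable
      rw [← Finset.set_biUnion_coe]
      exact (F.powerset.countable_toSet).biUnion fun F' _ => hg2 _ (ih F')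

lemma skolemT_mono {F F' : Finset X} (h : F ⊆ F') :
    ∀ n : ℕ, skolemT g n F ⊆ skolemT g n F' := by
  intro n
  induction n with
  | zero => exact Finset.coe_subset.2 h
  | succ n _ =>
      show (⋃ G ∈ F.powerset, g (skolemT g n G)) ⊆ ⋃ G ∈ F'.powerset, g (skolemT g n G)
      refine Set.iUnion₂_subset fun G hG => ?_
      exact Set.subset_iUnion₂ (s := fun G _ => g (skolemT g n G)) G
        (Finset.mem_powerset.2 ((Finset.mem_powerset.1 hG).trans h))

lemma g_skolemT_subset {F F' : Finset X} (h : F' ⊆ F) (n : ℕ) :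
    g (skolemT g n F') ⊆ skolemT g (n + 1) F := by
  show g (skolemT g n F') ⊆ ⋃ G ∈ F.powerset, g (skolemT g n G)
  exact Set.subset_iUnion₂ (s := fun G _ => g (skolemT g n G)) F' (Finset.mem_powerset.2 h)

lemma skolemT_le_succ (hg1 : ∀ Y : Set X, Y.Countable → Y ⊆ g Y)
    (hg2 : ∀ Y : Set X, Y.Countable → (g Y).Countable) (n : ℕ) (F : Finset X) :
    skolemT g n F ⊆ skolemT g (n + 1) F :=
  (hg1 _ (skolemT_countable hg2 n F)).trans (g_skolemT_subset Finset.Subset.rfl n)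

lemma skolemT_mono_nat (hg1 : ∀ Y : Set X, Y.Countable → Y ⊆ g Y)
    (hg2 : ∀ Y : Set X, Y.Countable → (g Y).Countable) {m n : ℕ} (h : m ≤ n) (F : Finset X) :
    skolemT g m F ⊆ skolemT g n F := by
  induction n with
  | zero => simp_all
  | succ n ih =>
      rcases Nat.lt_or_ge m (n + 1) with h' | h'
      · exact (ih (Nat.lt_succ_iff.1 h')).trans (skolemT_le_succ hg1 hg2 n F)
      · have : m = n + 1 := le_antisymm h h'
        subst this; rfl

lemma skolemT_subset_phi {C : Set X} {F : Finset X} (hF : ↑F ⊆ C) (n : ℕ) :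
    skolemT g n F ⊆ skolemPhi g C := by
  intro x hx
  exact Set.mem_iUnion.2 ⟨⟨F, hF⟩, Set.mem_iUnion.2 ⟨n, hx⟩⟩

lemma subset_skolemPhi (C : Set X) : C ⊆ skolemPhi g C := by
  intro x hx
  have h : (↑({x} : Finset X) : Set X) ⊆ C := by simpa using hx
  exact skolemT_subset_phi h 0 (by simp [skolemT])

lemma skolemPhi_mono {C C' : Set X} (h : C ⊆ C') : skolemPhi g C ⊆ skolemPhi g C' := by
  refine Set.iUnion_subset fun i => ?_
  exact Set.subset_iUnion_of_subset ⟨i.1, i.2.trans h⟩ subset_rfl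

lemma mem_skolemPhi_iff {C : Set X} {x : X} :
    x ∈ skolemPhi g C ↔ ∃ (F : Finset X) (n : ℕ), ↑F ⊆ C ∧ x ∈ skolemT g n F := by
  constructor
  · intro hx
    obtain ⟨i, hi⟩ := Set.mem_iUnion.1 hx
    obtain ⟨n, hn⟩ := Set.mem_iUnion.1 hi
    exact ⟨i.1, n, i.2, hn⟩
  · rintro ⟨F, n, hF, hx⟩
    exact skolemT_subset_phi hF n hx

lemma skolemPhi_infinite (hg2 : ∀ Y : Set X, Y.Countable → (g Y).Countable)
    (hg3 : ∀ Y : Set X, Y.Countable → (g Y).Infinite) (C : Set X) :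
    (skolemPhi g C).Infinite := by
  have h1 : g (skolemT g 0 (∅ : Finset X)) ⊆ skolemT g 1 (∅ : Finset X) :=
    g_skolemT_subset Finset.Subset.rfl 0
  have h2 : skolemT g 1 (∅ : Finset X) ⊆ skolemPhi g C :=
    skolemT_subset_phi (by simp) 1
  exact (hg3 _ (skolemT_countable hg2 0 ∅)).mono (h1.trans h2)

lemma skolemPhi_card (hg1 : ∀ Y : Set X, Y.Countable → Y ⊆ g Y)
    (hg2 : ∀ Y : Set X, Y.Countable → (g Y).Countable)
    (hg3 : ∀ Y : Set X, Y.Countable → (g Y).Infinite) (C : Set X) :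
    Cardinal.mk (skolemPhi g C) = max (Cardinal.mk C) Cardinal.aleph0 := by
  apply le_antisymm
  · -- upper bound
    classical
    have hι : #({F : Finset X // ↑F ⊆ C}) ≤ max ℵ₀ #C := by
      have hinj : Function.Injective
          (fun i : {F : Finset X // ↑F ⊆ C} => i.1.subtype (· ∈ C)) := by
        intro i j hij
        apply Subtype.ext
        have hi := Finset.subtype_map_of_mem (s := i.1) (p := (· ∈ C)) (fun x hx => i.2 hx)
        have hj := Finset.subtype_map_of_mem (s := j.1) (p := (· ∈ C)) (fun x hx => j.2 hx)
        have hij' : i.1.subtype (· ∈ C) = j.1.subtype (· ∈ C) := hij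
        rw [← hi, ← hj, hij']
      calc #({F : Finset X // ↑F ⊆ C}) ≤ #(Finset C) := Cardinal.mk_le_of_injective hinj
        _ ≤ #(List C) := Cardinal.mk_le_of_surjective List.toFinset_surjective
        _ ≤ max ℵ₀ #C := Cardinal.mk_list_le_max _
    have hsub : ∀ i : {F : Finset X // ↑F ⊆ C}, #(⋃ n : ℕ, skolemT g n i.1) ≤ ℵ₀ := by
      intro i
      exact (Set.countable_iUnion fun n => skolemT_countable hg2 n i.1).le_aleph0
    calc #(skolemPhi g C)
        ≤ #({F : Finset X // ↑F ⊆ C}) * ⨆ i : {F : Finset X // ↑F ⊆ C},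
            #(⋃ n : ℕ, skolemT g n i.1) := Cardinal.mk_iUnion_le _
      _ ≤ (max ℵ₀ #C) * ℵ₀ := by
          apply mul_le_mul' hι
          exact ciSup_le' hsub
      _ ≤ max (max (max ℵ₀ #C) ℵ₀) ℵ₀ := Cardinal.mul_le_max _ _
      _ = max (#C) ℵ₀ := by
          rw [max_comm (ℵ₀) (#C)]
          simp [max_assoc]
  · -- lower bound
    apply max_le
    · exact Cardinal.mk_le_mk_of_subset (subset_skolemPhi C)
    · rw [← Cardinal.infinite_iff]
      exact Set.infinite_coe_iff.2 (skolemPhi_infinite hg2 hg3 C)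

lemma skolemPhi_directed (hg1 : ∀ Y : Set X, Y.Countable → Y ⊆ g Y)
    (hg2 : ∀ Y : Set X, Y.Countable → (g Y).Countable)
    (𝒜 : Set (Set X)) (hne : 𝒜.Nonempty) (hdir : DirectedOn (· ⊆ ·) 𝒜) :
    skolemPhi g (⋃₀ 𝒜) = ⋃ A ∈ 𝒜, skolemPhi g A := by
  apply subset_antisymm
  · intro x hx
    obtain ⟨F, n, hF, hx⟩ := mem_skolemPhi_iff.1 hx
    rw [Set.sUnion_eq_biUnion] at hF
    obtain ⟨A, hA, hFA⟩ :=
      DirectedOn.exists_mem_subset_of_finset_subset_biUnion (f := id) hne hdir hF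
    exact Set.mem_biUnion hA (skolemT_subset_phi hFA n hx)
  · refine Set.iUnion₂_subset fun A hA => ?_
    exact skolemPhi_mono (Set.subset_sUnion_of_mem hA)

lemma skolemPhi_closure_mem {S : Set (Set X)} (hS : ExceedinglyRich S)
    (hg1 : ∀ Y : Set X, Y.Countable → Y ⊆ g Y)
    (hg2 : ∀ Y : Set X, Y.Countable → (g Y).Countable)
    (hg4 : ∀ Y : Set X, Y.Countable → closure (g Y) ∈ S) (C : Set X) :
    closure (skolemPhi g C) ∈ S := by
  classical
  set 𝒞 : Set (Set X) :=
    {G | ∃ (n : ℕ) (F : Finset X), ↑F ⊆ C ∧ G = closure (g (skolemT g n F))} with h𝒞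
  have h𝒞S : 𝒞 ⊆ S := by
    rintro G ⟨n, F, hF, rfl⟩
    exact hg4 _ (skolemT_countable hg2 n F)
  have h𝒞ne : 𝒞.Nonempty :=
    ⟨closure (g (skolemT g 0 (∅ : Finset X))), 0, ∅, by simp, rfl⟩
  have key : ∀ (n : ℕ) (F F₀ : Finset X), F ⊆ F₀ → ∀ k, n ≤ k →
      g (skolemT g n F) ⊆ g (skolemT g (k + 1) F₀) := by
    intro n F F₀ hFF₀ k hk
    have h1 : g (skolemT g n F) ⊆ skolemT g (n + 1) F₀ := g_skolemT_subset hFF₀ n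
    have h2 : skolemT g (n + 1) F₀ ⊆ skolemT g (k + 1) F₀ :=
      skolemT_mono_nat hg1 hg2 (Nat.succ_le_succ hk) F₀
    have h3 : skolemT g (k + 1) F₀ ⊆ g (skolemT g (k + 1) F₀) :=
      hg1 _ (skolemT_countable hg2 _ F₀)
    exact (h1.trans h2).trans h3
  have h𝒞dir : DirectedOn (· ⊆ ·) 𝒞 := by
    rintro G₁ ⟨n, F, hF, rfl⟩ G₂ ⟨m, F', hF', rfl⟩
    refine ⟨closure (g (skolemT g (max n m + 1) (F ∪ F'))),
      ⟨max n m + 1, F ∪ F', ?_, rfl⟩, ?_, ?_⟩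
    · rw [Finset.coe_union]; exact Set.union_subset hF hF'
    · exact closure_mono (key n F (F ∪ F') Finset.subset_union_left _ (le_max_left n m))
    · exact closure_mono (key m F' (F ∪ F') Finset.subset_union_right _ (le_max_right n m))
  have hmem : closure (⋃₀ 𝒞) ∈ S := hS.2.2 𝒞 h𝒞S h𝒞ne h𝒞dir
  have heq : closure (skolemPhi g C) = closure (⋃₀ 𝒞) := by
    apply subset_antisymm
    · apply closure_mono
      intro x hx
      obtain ⟨F, n, hF, hx⟩ := mem_skolemPhi_iff.1 hx
      refine Set.mem_sUnion.2 ⟨closure (g (skolemT g n F)), ⟨n, F, hF, rfl⟩, ?_⟩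
      exact subset_closure (hg1 _ (skolemT_countable hg2 n F) hx)
    · refine closure_minimal ?_ isClosed_closure
      rintro x ⟨G, ⟨n, F, hF, rfl⟩, hx⟩
      have h1 : g (skolemT g n F) ⊆ skolemPhi g C :=
        (g_skolemT_subset Finset.Subset.rfl n).trans (skolemT_subset_phi hF (n + 1))
      have : closure (g (skolemT g n F)) ⊆ closure (skolemPhi g C) := closure_mono h1
      exact this hx
  rw [heq]; exact hmem

/-- Key extension lemma: every countable set extends to a countably infinite set whose
closure belongs to an exceedingly rich family. -/
lemma extend_countable {S : Set (Set X)} (hS : ExceedinglyRich S) (Y : Set X)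
    (hY : Y.Countable) :
    ∃ Z : Set X, Y ⊆ Z ∧ Z.Countable ∧ Z.Infinite ∧ closure Z ∈ S := by
  obtain ⟨G, hGS, hYG, hdens⟩ := hS.2.1 Y
  have hdY : dens Y ≤ ℵ₀ := by
    refine le_trans (csInf_le' ⟨Y, subset_rfl, subset_closure, rfl⟩) ?_
    exact hY.le_aleph0
  have hdG : dens G = ℵ₀ := by
    rw [hdens]
    exact max_eq_right hdY
  have hmem : dens G ∈
      {c : Cardinal | ∃ D : Set X, D ⊆ G ∧ G ⊆ closure D ∧ Cardinal.mk D = c} := by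
    apply csInf_mem
    exact ⟨Cardinal.mk G, G, subset_rfl, subset_closure, rfl⟩
  obtain ⟨D, hDG, hGD, hDcard⟩ := hmem
  rw [hdG] at hDcard
  have hDcnt : D.Countable := by
    rw [← Cardinal.le_aleph0_iff_set_countable, hDcard]
  have hDinf : D.Infinite := by
    rw [← Set.infinite_coe_iff] at *
    rw [Cardinal.infinite_iff, hDcard]
  refine ⟨Y ∪ D, Set.subset_union_left, hY.union hDcnt, hDinf.mono Set.subset_union_right, ?_⟩
  have hsub : Y ∪ D ⊆ G := Set.union_subset hYG hDG
  have hclosed : IsClosed G := hS.1 G hGS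
  have h1 : closure (Y ∪ D) ⊆ G := hclosed.closure_subset_iff.2 hsub
  have h2 : G ⊆ closure (Y ∪ D) :=
    hGD.trans (closure_mono Set.subset_union_right)
  rw [subset_antisymm h1 h2]
  exact hGS

end AuxLemmas

/-- If `S` is exceedingly rich then some subfamily `S₀ ⊆ S` is large in the sense of
Skolem-like functions, i.e. `S₀ = {closure (φ C) : C ⊆ X}` for a Skolem-like `φ`. -/
theorem exceedinglyRich_to_skolemLike (S : Set (Set X)) (hS : ExceedinglyRich S) :
    ∃ S₀ : Set (Set X), S₀ ⊆ S ∧ ∃ φ : Set X → Set X, SkolemLike φ ∧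
      S₀ = {F : Set X | ∃ C : Set X, F = closure (φ C)} := by
  choose! g hg1 hg2 hg3 hg4 using extend_countable hS
  refine ⟨{F : Set X | ∃ C : Set X, F = closure (skolemPhi g C)}, ?_, skolemPhi g,
    ⟨?_, ?_, ?_⟩, rfl⟩
  · rintro F ⟨C, rfl⟩
    exact skolemPhi_closure_mem hS hg1 hg2 hg4 C
  · intro A
    exact ⟨subset_skolemPhi A, skolemPhi_card hg1 hg2 hg3 A⟩
  · intro A B hAB
    exact skolemPhi_mono hAB
  · intro 𝒜 hne hdir
    exact skolemPhi_directed hg1 hg2 𝒜 hne hdir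
end

section
/- Let X be a Banach space that is a Gurariĭ space, and let Y ⊆ X be a closed subspace that is an almost isometric ideal in X. Then Y is also a Gurariĭ space. -/
/-- A Banach space `X` is a Gurariĭ space if for every `ε > 0`, every finite-dimensional
normed space `F`, every subspace `E ⊆ F` and every linear isometric embedding `T : E → X`,
there is a linear extension `S : F → X` with `(1+ε)⁻¹‖x‖ ≤ ‖Sx‖ ≤ (1+ε)‖x‖` on `F`. -/
def IsGurarii (X : Type*) [NormedAddCommGroup X] [NormedSpace ℝ X] : Prop :=
  ∀ (F : Type) (_ : NormedAddCommGroup F) (_ : NormedSpace ℝ F) (_ : FiniteDimensional ℝ F)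
    (E : Submodule ℝ F) (T : E →L[ℝ] X), (∀ x : E, ‖T x‖ = ‖x‖) →
    ∀ ε : ℝ, 0 < ε → ∃ S : F →L[ℝ] X, (∀ x : E, S x = T x) ∧
      ∀ x : F, (1 + ε)⁻¹ * ‖x‖ ≤ ‖S x‖ ∧ ‖S x‖ ≤ (1 + ε) * ‖x‖

/-- Almost isometric ideal. -/
def AiIdeal {X : Type*} [NormedAddCommGroup X] [NormedSpace ℝ X] (Y : Submodule ℝ X) : Prop :=
  ∀ E : Submodule ℝ X, FiniteDimensional ℝ E → ∀ ε : ℝ, 0 < ε →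
    ∃ T : E →L[ℝ] X, (∀ x : E, T x ∈ Y) ∧ (∀ x : E, (x : X) ∈ Y → T x = x) ∧
      ∀ x : E, (1 + ε)⁻¹ * ‖x‖ ≤ ‖T x‖ ∧ ‖T x‖ ≤ (1 + ε) * ‖x‖

/-- An almost isometric ideal in a Gurariĭ space is a Gurariĭ space. -/
theorem aiIdeal_isGurarii {X : Type*} [NormedAddCommGroup X] [NormedSpace ℝ X]
    [CompleteSpace X] (hX : IsGurarii X) (Y : Submodule ℝ X) (hYc : IsClosed (Y : Set X))
    (hY : AiIdeal Y) : IsGurarii ↥Y := by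
  intro F iN iS iFD E T hT ε hε
  letI := iN; letI := iS; letI := iFD
  set δ := min (ε / 3) 1 with hδdef
  have hδ : 0 < δ := lt_min (by linarith) one_pos
  have hδε : (1 + δ) * (1 + δ) ≤ 1 + ε := by
    have h1 : δ ≤ ε / 3 := min_le_left _ _
    have h2 : δ ≤ 1 := min_le_right _ _
    nlinarith
  have h1δ : (0:ℝ) < 1 + δ := by linarith
  have h1ε : (0:ℝ) < 1 + ε := by linarith
  -- extend the composition with the inclusion into X
  let T' : E →L[ℝ] X := Y.subtypeL.comp T
  have hT' : ∀ x : E, ‖T' x‖ = ‖x‖ := fun x => hT x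
  obtain ⟨S', hS'E, hS'b⟩ := hX F iN iS iFD E T' hT' δ hδ
  let V : Submodule ℝ X := LinearMap.range (S' : F →ₗ[ℝ] X)
  have hVfd : FiniteDimensional ℝ V := by
    have : Module.Finite ℝ (LinearMap.range (S' : F →ₗ[ℝ] X)) :=
      Module.Finite.range _
    exact this
  obtain ⟨P, hPY, hPfix, hPb⟩ := hY V hVfd δ hδ
  let S'' : F →L[ℝ] V := S'.codRestrict V (fun x => LinearMap.mem_range_self _ x)
  let S : F →L[ℝ] Y := (P.comp S'').codRestrict Y (fun x => hPY _)
  refine ⟨S, ?_, ?_⟩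
  · intro x
    apply Subtype.ext
    have hmem : ((S'' (x : F) : X)) ∈ Y := by
      show (S' (x : F)) ∈ Y
      rw [hS'E x]
      exact (T x).2
    have : (S (x : F) : X) = P (S'' (x : F)) := rfl
    rw [this, hPfix _ hmem]
    show (S' (x : F)) = (T x : X)
    exact hS'E x
  · intro x
    have hb1 := hS'b x
    have hb2 := hPb (S'' x)
    have hn1 : ‖S x‖ = ‖P (S'' x)‖ := rfl
    have hn2 : ‖S'' x‖ = ‖S' x‖ := rfl
    rw [hn1]
    rw [hn2] at hb2
    have hxnn : (0:ℝ) ≤ ‖x‖ := norm_nonneg x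
    constructor
    · have hlow : (1 + δ)⁻¹ * ((1 + δ)⁻¹ * ‖x‖) ≤ ‖P (S'' x)‖ := by
        calc (1 + δ)⁻¹ * ((1 + δ)⁻¹ * ‖x‖) ≤ (1 + δ)⁻¹ * ‖S' x‖ := by
              apply mul_le_mul_of_nonneg_left hb1.1 (by positivity)
          _ ≤ ‖P (S'' x)‖ := hb2.1
      refine le_trans ?_ hlow
      rw [← mul_assoc, ← mul_inv]
      apply mul_le_mul_of_nonneg_right _ hxnn
      exact inv_anti₀ (by positivity) hδε
    · have hup : ‖P (S'' x)‖ ≤ (1 + δ) * ((1 + δ) * ‖x‖) := by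
        calc ‖P (S'' x)‖ ≤ (1 + δ) * ‖S' x‖ := hb2.2
          _ ≤ (1 + δ) * ((1 + δ) * ‖x‖) :=
              mul_le_mul_of_nonneg_left hb1.2 (le_of_lt h1δ)
      refine le_trans hup ?_
      rw [← mul_assoc]
      exact mul_le_mul_of_nonneg_right hδε hxnn
end

section
/- Let X be a Banach space that is an L₁-predual space, and let Y ⊆ X be a closed subspace that is an ideal in X. Then Y is also an L₁-predual space. -/
/-- A Banach space `X` is an `L₁`-predual space if for every `ε > 0`, every finite-dimensional
normed space `F`, every subspace `E ⊆ F` and every linear isometric embedding `T : E → X`,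
there is a linear extension `S : F → X` with `‖Sx‖ ≤ (1+ε)‖x‖` on `F`. -/
def IsL1Predual (X : Type*) [NormedAddCommGroup X] [NormedSpace ℝ X] : Prop :=
  ∀ (F : Type) (_ : NormedAddCommGroup F) (_ : NormedSpace ℝ F) (_ : FiniteDimensional ℝ F)
    (E : Submodule ℝ F) (T : E →L[ℝ] X), (∀ x : E, ‖T x‖ = ‖x‖) →
    ∀ ε : ℝ, 0 < ε → ∃ S : F →L[ℝ] X, (∀ x : E, S x = T x) ∧
      ∀ x : F, ‖S x‖ ≤ (1 + ε) * ‖x‖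

/-- Ideal in a Banach space. -/
def BanachIdeal {X : Type*} [NormedAddCommGroup X] [NormedSpace ℝ X] (Y : Submodule ℝ X) : Prop :=
  ∀ E : Submodule ℝ X, FiniteDimensional ℝ E → ∀ ε : ℝ, 0 < ε →
    ∃ T : E →L[ℝ] X, (∀ x : E, T x ∈ Y) ∧ (∀ x : E, (x : X) ∈ Y → T x = x) ∧
      ∀ x : E, ‖T x‖ ≤ (1 + ε) * ‖x‖

/-- An ideal in an `L₁`-predual space is an `L₁`-predual space. -/
theorem ideal_isL1Predual {X : Type*} [NormedAddCommGroup X] [NormedSpace ℝ X]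
    [CompleteSpace X] (hX : IsL1Predual X) (Y : Submodule ℝ X) (hYc : IsClosed (Y : Set X))
    (hY : BanachIdeal Y) : IsL1Predual ↥Y := by
  intro F iN iS iFin E T hT ε hε
  set ε' : ℝ := min (ε / 3) 1 with hε'def
  have hε'pos : 0 < ε' := lt_min (by linarith) one_pos
  have hε'le : ε' ≤ ε / 3 := min_le_left _ _
  have hε'le1 : ε' ≤ 1 := min_le_right _ _
  -- Step 1: extend the composition with the inclusion Y ↪ X.
  have hiso : ∀ x : E, ‖(Y.subtypeL.comp T) x‖ = ‖x‖ := by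
    intro x
    simpa using hT x
  obtain ⟨S, hSext, hSnorm⟩ :=
    hX F iN iS iFin E (Y.subtypeL.comp T) hiso ε' hε'pos
  -- Step 2: the range of S is finite dimensional; apply the ideal property.
  set G : Submodule ℝ X := LinearMap.range (S : F →ₗ[ℝ] X) with hGdef
  haveI : FiniteDimensional ℝ G := by
    exact Module.Finite.range (S : F →ₗ[ℝ] X)
  obtain ⟨P, hP1, hP2, hP3⟩ := hY G inferInstance ε' hε'pos
  -- the corestriction of S into G
  have hmem : ∀ x : F, S x ∈ G := fun x => ⟨x, rfl⟩
  set S₀ : F →L[ℝ] G := S.codRestrict G hmem with hS₀def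
  set Q : F →L[ℝ] X := P.comp S₀ with hQdef
  have hQmem : ∀ x : F, Q x ∈ Y := fun x => hP1 _
  refine ⟨Q.codRestrict Y hQmem, ?_, ?_⟩
  · intro x
    apply Subtype.ext
    have hxY : S (x : F) ∈ Y := by
      rw [hSext x]; exact (T x).2
    have : P (S₀ (x : F)) = S (x : F) := hP2 _ hxY
    calc (Q.codRestrict Y hQmem (x : F) : X) = P (S₀ (x : F)) := rfl
      _ = S (x : F) := this
      _ = (Y.subtypeL.comp T) x := hSext x
      _ = ((T x : Y) : X) := rfl
  · intro x
    have h1 : ‖(Q.codRestrict Y hQmem x : Y)‖ = ‖P (S₀ x)‖ := rfl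
    have h2 : ‖P (S₀ x)‖ ≤ (1 + ε') * ‖S₀ x‖ := hP3 _
    have h3 : ‖S₀ x‖ = ‖S x‖ := rfl
    have h4 : ‖S x‖ ≤ (1 + ε') * ‖x‖ := hSnorm x
    have hx0 : (0 : ℝ) ≤ ‖x‖ := norm_nonneg _
    have : ‖(Q.codRestrict Y hQmem x : Y)‖ ≤ (1 + ε') * ((1 + ε') * ‖x‖) := by
      rw [h1]
      calc ‖P (S₀ x)‖ ≤ (1 + ε') * ‖S₀ x‖ := h2
        _ = (1 + ε') * ‖S x‖ := by rw [h3]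
        _ ≤ (1 + ε') * ((1 + ε') * ‖x‖) := by
            apply mul_le_mul_of_nonneg_left h4 (by linarith)
    refine this.trans ?_
    nlinarith [hx0, hε'pos.le,
      mul_le_mul_of_nonneg_right hε'le1 (mul_nonneg hε'pos.le hx0),
      mul_le_mul_of_nonneg_right (by linarith : 3 * ε' ≤ ε) hx0]
end

section
/- Let X be a Banach space that fails the Daugavet property, witnessed by y ∈ S_X, x* ∈ S_{X*}, and ε > 0 such that for every x ∈ S_X either x*(x) < 1 − ε or ‖x + y‖ < 2 − ε. Let D ⊆ B_X be a countable set with sup_{x∈D} |x*(x)| = 1. Then every closed subspace Y ⊆ X containing {y} ∪ D fails the Daugavet property. -/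
/-- The Daugavet property, via the Kadets–Shvidkoy–Sirotkin–Werner characterization. -/
def HasDaugavetProperty (Z : Type*) [NormedAddCommGroup Z] [NormedSpace ℝ Z] : Prop :=
  ∀ z : Z, ‖z‖ = 1 → ∀ g : Z →L[ℝ] ℝ, ‖g‖ = 1 → ∀ ε : ℝ, 0 < ε →
    ∃ x : Z, ‖x‖ = 1 ∧ 1 - ε ≤ g x ∧ 2 - ε ≤ ‖x + z‖

/-- If `X` fails the Daugavet property, witnessed by `y ∈ S_X`, `x* ∈ S_{X*}` and `ε > 0`,
and `D ⊆ B_X` is countable with `sup_{x ∈ D} |x*(x)| = 1`, then every closed subspace `Y`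
containing `{y} ∪ D` fails the Daugavet property. -/
theorem subspace_fails_daugavet {X : Type*} [NormedAddCommGroup X] [NormedSpace ℝ X]
    [CompleteSpace X]
    (y : X) (hy : ‖y‖ = 1) (f : X →L[ℝ] ℝ) (hf : ‖f‖ = 1) (ε : ℝ) (hε : 0 < ε)
    (hfail : ∀ x : X, ‖x‖ = 1 → f x < 1 - ε ∨ ‖x + y‖ < 2 - ε)
    (D : Set X) (hDc : D.Countable) (hDball : ∀ x ∈ D, ‖x‖ ≤ 1)
    (hDsup : ∀ c : ℝ, c < 1 → ∃ x ∈ D, c < |f x|)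
    (Y : Submodule ℝ X) (hYc : IsClosed (Y : Set X)) (hyY : y ∈ Y)
    (hDY : D ⊆ (Y : Set X)) :
    ¬ HasDaugavetProperty ↥Y := by
  intro h
  set g : Y →L[ℝ] ℝ := f.comp Y.subtypeL with hg_def
  have hgle : ‖g‖ ≤ 1 := by
    refine ContinuousLinearMap.opNorm_le_bound _ zero_le_one fun v => ?_
    calc ‖g v‖ = ‖f (v : X)‖ := rfl
    _ ≤ ‖f‖ * ‖(v : X)‖ := f.le_opNorm _
    _ = 1 * ‖v‖ := by rw [hf]; rfl
  have hg : ‖g‖ = 1 := by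
    refine le_antisymm (by simpa using hgle) ?_
    by_contra hlt
    push_neg at hlt
    obtain ⟨x, hxD, hx⟩ := hDsup ‖g‖ hlt
    have hxY : x ∈ Y := hDY hxD
    have : |f x| = ‖g ⟨x, hxY⟩‖ := rfl
    have hle : ‖g ⟨x, hxY⟩‖ ≤ ‖g‖ * ‖(⟨x, hxY⟩ : Y)‖ := g.le_opNorm _
    have hnx : ‖(⟨x, hxY⟩ : Y)‖ ≤ 1 := hDball x hxD
    nlinarith [norm_nonneg g]
  obtain ⟨x, hx1, hx2, hx3⟩ := h ⟨y, hyY⟩ (by simpa using hy) g hg ε hε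
  have hxn : ‖(x : X)‖ = 1 := hx1
  rcases hfail (x : X) hxn with hc | hc
  · exact absurd hx2 (by simpa [hg_def] using not_le.mpr hc)
  · have : ‖(x : X) + y‖ = ‖x + (⟨y, hyY⟩ : Y)‖ := rfl
    linarith [this ▸ hc]
end

section
/- Let X be a Banach space with the Daugavet property and Y ⊆ X an almost isometric ideal in X. Then Y has the Daugavet property, using the characterization: for every y ∈ S_Y, y* ∈ S_{Y*}, and ε > 0 there exists x ∈ S_Y with y*(x) ≥ 1 − ε and ‖x + y‖ ≥ 2 − ε. -/
open Filter Set Metric NormedSpace Topology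

section Aux

variable {X : Type*} [NormedAddCommGroup X] [NormedSpace ℝ X]

noncomputable instance fdSubSemilatticeSup :
    SemilatticeSup {E : Submodule ℝ X // FiniteDimensional ℝ ↥E} :=
  Subtype.semilatticeSup fun E F hE hF => by
    haveI := hE; haveI := hF
    exact Submodule.finiteDimensional_sup E F

instance fdSubNonempty : Nonempty {E : Submodule ℝ X // FiniteDimensional ℝ ↥E} :=
  ⟨⟨⊥, inferInstance⟩⟩

lemma clusterPt_mem_closed {α : Type*} [TopologicalSpace α] {a : α} {F : Filter α}
    (h : ClusterPt a F) {C : Set α} (hC : IsClosed C) (hmem : C ∈ F) : a ∈ C := by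
  have h2 : ClusterPt a (𝓟 C) := h.mono (le_principal_iff.mpr hmem)
  simpa [hC.closure_eq] using mem_closure_iff_clusterPt.mpr h2

set_option maxHeartbeats 1600000 in
/-- The key extension lemma: from an ai-ideal one obtains a norm-one extension `G` of `g`
together with, for any `w`, `y' ∈ Y`, `δ > 0`, an element `x₁ ∈ Y` behaving like the image
of `w` under an almost isometry fixing `y'` and almost respecting `G`. -/
lemma aiIdeal_exists_extension (Y : Submodule ℝ X) (hY : AiIdeal Y)
    (g : ↥Y →L[ℝ] ℝ) (hg : ‖g‖ = 1) :
    ∃ G : X →L[ℝ] ℝ, ‖G‖ = 1 ∧ (∀ v : ↥Y, G ↑v = g v) ∧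
      ∀ (w y' : X), y' ∈ Y → ∀ δ : ℝ, 0 < δ → ∃ x₁ : ↥Y,
        (1 + δ)⁻¹ * ‖w‖ ≤ ‖x₁‖ ∧ ‖x₁‖ ≤ (1 + δ) * ‖w‖ ∧
        (1 + δ)⁻¹ * ‖w + y'‖ ≤ ‖(x₁ : X) + y'‖ ∧
        G w - δ ≤ g x₁ := by
  classical
  set ι := {E : Submodule ℝ X // FiniteDimensional ℝ ↥E} × ℕ with hι
  -- choose the almost isometries
  have key : ∀ i : ι, ∃ T : ↥i.1.1 →L[ℝ] X, (∀ x, T x ∈ Y) ∧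
      (∀ x : ↥i.1.1, (x : X) ∈ Y → T x = x) ∧
      ∀ x : ↥i.1.1, (1 + 1/((i.2 : ℝ)+1))⁻¹ * ‖x‖ ≤ ‖T x‖ ∧
        ‖T x‖ ≤ (1 + 1/((i.2 : ℝ)+1)) * ‖x‖ :=
    fun i => hY i.1.1 i.1.2 (1/((i.2 : ℝ)+1)) (by positivity)
  choose T hTY hTfix hTnorm using key
  -- the composed functionals and their Hahn-Banach extensions
  set φ : ∀ i : ι, ↥i.1.1 →L[ℝ] ℝ :=
    fun i => g.comp ((T i).codRestrict Y (hTY i)) with hφdef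
  have hφapp : ∀ (i : ι) (x : ↥i.1.1), φ i x = g ⟨T i x, hTY i x⟩ := by
    intro i x; rfl
  have hφnorm : ∀ i : ι, ‖φ i‖ ≤ 1 + 1/((i.2 : ℝ)+1) := by
    intro i
    refine ContinuousLinearMap.opNorm_le_bound _ (by positivity) (fun x => ?_)
    rw [hφapp]
    calc ‖g ⟨T i x, hTY i x⟩‖ ≤ ‖g‖ * ‖(⟨T i x, hTY i x⟩ : ↥Y)‖ := g.le_opNorm _
    _ = ‖T i x‖ := by rw [hg, one_mul]; rfl
    _ ≤ (1 + 1/((i.2 : ℝ)+1)) * ‖x‖ := (hTnorm i x).2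
  choose Gs hGs hGsnorm using fun i : ι => exists_extension_norm_eq i.1.1 (φ i)
  have hGsle : ∀ i : ι, ‖Gs i‖ ≤ 1 + 1/((i.2 : ℝ)+1) := fun i => (hGsnorm i) ▸ hφnorm i
  -- pass to the weak-star dual and take a cluster point
  set f : ι → WeakDual ℝ X := fun i => StrongDual.toWeakDual (Gs i) with hfdef
  have hfapp : ∀ (i : ι) (x : X), f i x = Gs i x := fun i x => rfl
  set K : Set (WeakDual ℝ X) := WeakDual.toStrongDual ⁻¹' closedBall (0 : StrongDual ℝ X) 2 with hK
  have hKcompact : IsCompact K := WeakDual.isCompact_closedBall (0 : StrongDual ℝ X) 2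
  have hfK : ∀ i, f i ∈ K := by
    intro i
    have h1 : (1 : ℝ) + 1/((i.2 : ℝ)+1) ≤ 2 := by
      have : 1/((i.2 : ℝ)+1) ≤ 1 := by
        rw [div_le_one (by positivity)]; linarith [Nat.cast_nonneg (α := ℝ) i.2]
      linarith
    simp only [hK, mem_preimage, mem_closedBall, dist_zero_right]
    exact le_trans (hGsle i) h1
  have hle : map f atTop ≤ 𝓟 K := le_principal_iff.mpr (mem_map.mpr (by
    filter_upwards with i using hfK i))
  obtain ⟨G₀, hG₀K, hcl⟩ := hKcompact.exists_clusterPt hle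
  -- helper: cluster point lies in weak*-closed sets the net is eventually in
  have hclosed : ∀ (C : Set (WeakDual ℝ X)), IsClosed C → (∀ᶠ i in atTop, f i ∈ C) →
      G₀ ∈ C := by
    intro C hC hev
    exact clusterPt_mem_closed hcl hC (mem_map.mpr hev)
  -- helper: frequent visiting of open sets above any index
  have hfreq : ∀ (U : Set (WeakDual ℝ X)), IsOpen U → G₀ ∈ U → ∀ i₀ : ι,
      ∃ i, i₀ ≤ i ∧ f i ∈ U := by
    intro U hU hGU i₀
    have hS : f '' Ici i₀ ∈ map f atTop :=
      mem_map.mpr (mem_of_superset (Ici_mem_atTop i₀) (subset_preimage_image f _))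
    obtain ⟨ψ, hψU, hψS⟩ := clusterPt_iff_nonempty.mp hcl (hU.mem_nhds hGU) hS
    obtain ⟨i, hi, rfl⟩ := hψS
    exact ⟨i, hi, hψU⟩
  set G : X →L[ℝ] ℝ := WeakDual.toStrongDual G₀ with hGdef
  have hGapp : ∀ x : X, G x = G₀ x := fun x => rfl
  -- G agrees with g on Y
  have hGY : ∀ v : ↥Y, G ↑v = g v := by
    intro v
    have hC : IsClosed {ψ : WeakDual ℝ X | ψ ↑v = g v} :=
      isClosed_eq (WeakDual.eval_continuous (v : X)) continuous_const
    have hev : ∀ᶠ i in atTop, f i ∈ {ψ : WeakDual ℝ X | ψ ↑v = g v} := by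
      have hfd : FiniteDimensional ℝ ↥(Submodule.span ℝ ({(v : X)} : Set X)) :=
        FiniteDimensional.span_of_finite ℝ (Set.finite_singleton _)
      filter_upwards [Ici_mem_atTop ((⟨Submodule.span ℝ {(v : X)}, hfd⟩, 0) : ι)] with i hi
      have hvE : (v : X) ∈ i.1.1 := by
        have h1 : Submodule.span ℝ ({(v : X)} : Set X) ≤ i.1.1 := hi.1
        exact h1 (Submodule.mem_span_singleton_self _)
      show f i ↑v = g v
      have hfi : f i ↑v = Gs i ↑v := rfl
      rw [hfi, hGs i ⟨(v : X), hvE⟩]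
      rw [hφapp]
      congr 1
      exact Subtype.ext (hTfix i ⟨(v : X), hvE⟩ v.2)
    exact hclosed _ hC hev
  -- norm bound from above
  have hGle : ‖G‖ ≤ 1 := by
    by_contra hcon
    push_neg at hcon
    obtain ⟨k, hk⟩ := exists_nat_one_div_lt (by linarith : (0:ℝ) < ‖G‖ - 1)
    have hC : IsClosed (WeakDual.toStrongDual ⁻¹'
        closedBall (0 : StrongDual ℝ X) (1 + 1/((k:ℝ)+1)) : Set (WeakDual ℝ X)) :=
      WeakDual.isClosed_closedBall _ _
    have hev : ∀ᶠ i in atTop, f i ∈ (WeakDual.toStrongDual ⁻¹'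
        closedBall (0 : StrongDual ℝ X) (1 + 1/((k:ℝ)+1)) : Set (WeakDual ℝ X)) := by
      filter_upwards [Ici_mem_atTop ((⟨⊥, inferInstance⟩, k) : ι)] with i hi
      have hik : (k : ℝ) ≤ (i.2 : ℝ) := Nat.cast_le.mpr hi.2
      have hle2 : ((k:ℝ)+1) ≤ ((i.2 : ℝ)+1) := by linarith
      have : (1 : ℝ) + 1/((i.2 : ℝ)+1) ≤ 1 + 1/((k:ℝ)+1) := by
        have := one_div_le_one_div_of_le (by positivity : (0:ℝ) < (k:ℝ)+1) hle2
        linarith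
      simp only [mem_preimage, mem_closedBall, dist_zero_right]
      exact le_trans (hGsle i) this
    have := hclosed _ hC hev
    simp only [mem_preimage, mem_closedBall, dist_zero_right] at this
    have hGnorm : ‖G‖ ≤ 1 + 1/((k:ℝ)+1) := this
    rw [one_div] at hk
    rw [one_div] at hGnorm
    linarith
  -- norm bound from below
  have hGge : (1 : ℝ) ≤ ‖G‖ := by
    have hsub : ‖Y.subtypeL‖ ≤ 1 :=
      ContinuousLinearMap.opNorm_le_bound _ zero_le_one (fun x => by simp)
    have hcomp : g = G.comp Y.subtypeL := by
      ext v
      simp only [ContinuousLinearMap.comp_apply, Submodule.coe_subtypeL',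
        Submodule.coe_subtype]
      exact (hGY v).symm
    calc (1 : ℝ) = ‖g‖ := hg.symm
    _ = ‖G.comp Y.subtypeL‖ := by rw [← hcomp]
    _ ≤ ‖G‖ * ‖Y.subtypeL‖ := ContinuousLinearMap.opNorm_comp_le _ _
    _ ≤ ‖G‖ * 1 := by
        exact mul_le_mul_of_nonneg_left hsub (norm_nonneg _)
    _ = ‖G‖ := mul_one _
  refine ⟨G, le_antisymm hGle hGge, hGY, ?_⟩
  -- the approximation property
  intro w y' hy' δ hδ
  obtain ⟨k, hk⟩ := exists_nat_one_div_lt hδ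
  have hfd : FiniteDimensional ℝ ↥(Submodule.span ℝ ({w, y'} : Set X)) :=
    FiniteDimensional.span_of_finite ℝ (by simp [Set.finite_singleton])
  set i₀ : ι := (⟨Submodule.span ℝ ({w, y'} : Set X), hfd⟩, k) with hi₀
  have hU : IsOpen {ψ : WeakDual ℝ X | |ψ w - G₀ w| < δ} := by
    have : Continuous fun ψ : WeakDual ℝ X => |ψ w - G₀ w| :=
      ((WeakDual.eval_continuous w).sub continuous_const).abs
    exact isOpen_lt this continuous_const
  have hGU : G₀ ∈ {ψ : WeakDual ℝ X | |ψ w - G₀ w| < δ} := by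
    simp [hδ]
  obtain ⟨i, hi, hiU⟩ := hfreq _ hU hGU i₀
  -- membership facts
  have hspan : Submodule.span ℝ ({w, y'} : Set X) ≤ i.1.1 := hi.1
  have hwE : w ∈ i.1.1 := hspan (Submodule.subset_span (by simp))
  have hyE : y' ∈ i.1.1 := hspan (Submodule.subset_span (by simp))
  have hεδ : 1/((i.2 : ℝ)+1) ≤ δ := by
    have hik : (k : ℝ) ≤ (i.2 : ℝ) := Nat.cast_le.mpr hi.2
    have hle2 : ((k:ℝ)+1) ≤ ((i.2 : ℝ)+1) := by linarith
    have := one_div_le_one_div_of_le (by positivity : (0:ℝ) < (k:ℝ)+1) hle2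
    linarith
  set ε : ℝ := 1/((i.2 : ℝ)+1) with hε
  have hε0 : 0 < ε := by positivity
  -- the element
  refine ⟨⟨T i ⟨w, hwE⟩, hTY i _⟩, ?_, ?_, ?_, ?_⟩
  · -- lower norm bound
    have h1 := (hTnorm i ⟨w, hwE⟩).1
    have h2 : (1 + δ)⁻¹ ≤ (1 + ε)⁻¹ := by
      apply inv_anti₀ (by positivity)
      linarith
    have hnw : ‖(⟨w, hwE⟩ : ↥i.1.1)‖ = ‖w‖ := rfl
    have hnx : ‖(⟨T i ⟨w, hwE⟩, hTY i _⟩ : ↥Y)‖ = ‖T i ⟨w, hwE⟩‖ := rfl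
    rw [hnx]
    rw [hnw] at h1
    calc (1 + δ)⁻¹ * ‖w‖ ≤ (1 + ε)⁻¹ * ‖w‖ :=
      mul_le_mul_of_nonneg_right h2 (norm_nonneg _)
    _ ≤ ‖T i ⟨w, hwE⟩‖ := h1
  · have h1 := (hTnorm i ⟨w, hwE⟩).2
    have hnw : ‖(⟨w, hwE⟩ : ↥i.1.1)‖ = ‖w‖ := rfl
    have hnx : ‖(⟨T i ⟨w, hwE⟩, hTY i _⟩ : ↥Y)‖ = ‖T i ⟨w, hwE⟩‖ := rfl
    rw [hnx]
    rw [hnw] at h1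
    calc ‖T i ⟨w, hwE⟩‖ ≤ (1 + ε) * ‖w‖ := h1
    _ ≤ (1 + δ) * ‖w‖ := mul_le_mul_of_nonneg_right (by linarith) (norm_nonneg _)
  · -- the sum bound
    have hTy : T i ⟨y', hyE⟩ = y' := hTfix i ⟨y', hyE⟩ hy'
    have hsum : T i ⟨w, hwE⟩ + y' = T i (⟨w, hwE⟩ + ⟨y', hyE⟩) := by
      rw [map_add, hTy]
    have h1 := (hTnorm i (⟨w, hwE⟩ + ⟨y', hyE⟩)).1
    have hnw : ‖(⟨w, hwE⟩ + ⟨y', hyE⟩ : ↥i.1.1)‖ = ‖w + y'‖ := rfl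
    rw [hnw] at h1
    have h2 : (1 + δ)⁻¹ ≤ (1 + ε)⁻¹ := by
      apply inv_anti₀ (by positivity)
      linarith
    have hcoe : ‖((⟨T i ⟨w, hwE⟩, hTY i _⟩ : ↥Y) : X) + y'‖ = ‖T i ⟨w, hwE⟩ + y'‖ := rfl
    rw [hcoe, hsum]
    calc (1 + δ)⁻¹ * ‖w + y'‖ ≤ (1 + ε)⁻¹ * ‖w + y'‖ :=
      mul_le_mul_of_nonneg_right h2 (norm_nonneg _)
    _ ≤ ‖T i (⟨w, hwE⟩ + ⟨y', hyE⟩)‖ := h1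
  · -- the functional bound
    have h1 : f i w = Gs i w := rfl
    have h2 : Gs i w = g ⟨T i ⟨w, hwE⟩, hTY i _⟩ := by
      rw [hGs i ⟨w, hwE⟩, hφapp]
    have h3 : |f i w - G₀ w| < δ := hiU
    have h4 : G w = G₀ w := rfl
    rw [h1, h2] at h3
    rw [h4]
    cases' abs_lt.mp h3 with h5 h6
    linarith

end Aux

set_option maxHeartbeats 1600000 in
/-- An almost isometric ideal in a space with the Daugavet property has the Daugavet
property. -/
theorem aiIdeal_hasDaugavet {X : Type*} [NormedAddCommGroup X] [NormedSpace ℝ X]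
    [CompleteSpace X] (hX : HasDaugavetProperty X) (Y : Submodule ℝ X)
    (hYc : IsClosed (Y : Set X)) (hY : AiIdeal Y) :
    HasDaugavetProperty ↥Y := by
  intro y hy g hg ε hε
  obtain ⟨G, hGnorm, hGY, hGapprox⟩ := aiIdeal_exists_extension Y hY g hg
  set δ : ℝ := min (ε/5) (1/2) with hδdef
  have hδ0 : 0 < δ := lt_min (by linarith) (by norm_num)
  have hδε : δ ≤ ε/5 := min_le_left _ _
  have hδ1 : δ ≤ 1/2 := min_le_right _ _
  -- apply the Daugavet property of X
  have hyX : ‖(y : X)‖ = 1 := hy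
  obtain ⟨w, hw1, hw2, hw3⟩ := hX (y : X) hyX G hGnorm δ hδ0
  -- pull back into Y
  obtain ⟨x₁, hx₁, hx₂, hx₃, hx₄⟩ := hGapprox w (y : X) y.2 δ hδ0
  set a : ℝ := ‖x₁‖ with ha
  have hinv : (1 - δ) ≤ (1 + δ)⁻¹ := by
    rw [show (1 + δ)⁻¹ = 1/(1 + δ) from (one_div _).symm, le_div_iff₀ (by positivity)]
    nlinarith
  have ha1 : 1 - δ ≤ a := by
    have := hx₁
    rw [hw1, mul_one] at this
    linarith
  have ha0 : 0 < a := by nlinarith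
  have ha2 : a ≤ 1 + δ := by
    have := hx₂
    rw [hw1, mul_one] at this
    linarith
  have hsum : (1 - δ) * (2 - δ) ≤ ‖(x₁ : X) + (y : X)‖ := by
    have h1 : (1 + δ)⁻¹ * (2 - δ) ≤ (1 + δ)⁻¹ * ‖w + (y : X)‖ :=
      mul_le_mul_of_nonneg_left hw3 (by positivity)
    have h2 : (1 - δ) * (2 - δ) ≤ (1 + δ)⁻¹ * (2 - δ) :=
      mul_le_mul_of_nonneg_right hinv (by linarith)
    linarith
  have hgx₁ : 1 - 2*δ ≤ g x₁ := by linarith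
  -- normalize
  refine ⟨a⁻¹ • x₁, ?_, ?_, ?_⟩
  · rw [norm_smul, norm_inv, Real.norm_eq_abs, abs_of_pos ha0]
    exact inv_mul_cancel₀ ha0.ne'
  · -- functional bound
    rw [map_smul]
    have hainv : (1 + δ)⁻¹ ≤ a⁻¹ := inv_anti₀ (by positivity) ha2
    have hainv' : 1 - δ ≤ a⁻¹ := le_trans hinv hainv
    have hgpos : 0 ≤ g x₁ := by nlinarith
    have : (1 - δ) * (1 - 2*δ) ≤ a⁻¹ * g x₁ := by
      have h1 : (1 - δ) * (1 - 2*δ) ≤ a⁻¹ * (1 - 2*δ) :=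
        mul_le_mul_of_nonneg_right hainv' (by nlinarith)
      have h2 : a⁻¹ * (1 - 2*δ) ≤ a⁻¹ * g x₁ :=
        mul_le_mul_of_nonneg_left hgx₁ (by positivity)
      linarith
    have hfinal : 1 - ε ≤ (1 - δ) * (1 - 2*δ) := by nlinarith
    simp only [smul_eq_mul]
    linarith
  · -- norm of sum bound
    have hdiff : ‖(a⁻¹ • x₁) - x₁‖ = |1 - a| := by
      have : (a⁻¹ • x₁) - x₁ = (a⁻¹ - 1) • x₁ := by
        rw [sub_smul, one_smul]
      rw [this, norm_smul, Real.norm_eq_abs, ← ha]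
      rw [show |a⁻¹ - 1| * a = |a⁻¹ - 1| * |a| from by rw [abs_of_pos ha0]]
      rw [← abs_mul, sub_mul, inv_mul_cancel₀ ha0.ne', one_mul]
    have hdiffle : ‖(a⁻¹ • x₁) - x₁‖ ≤ δ := by
      rw [hdiff, abs_le]
      constructor <;> linarith
    have htri : ‖x₁ + y‖ - ‖(a⁻¹ • x₁) - x₁‖ ≤ ‖(a⁻¹ • x₁) + y‖ := by
      have heq : (a⁻¹ • x₁ + y) + (x₁ - a⁻¹ • x₁) = x₁ + y := by abel
      have h := norm_add_le (a⁻¹ • x₁ + y) (x₁ - a⁻¹ • x₁)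
      rw [heq, norm_sub_rev] at h
      linarith
    have hxy : (1 - δ) * (2 - δ) ≤ ‖x₁ + y‖ := by
      have hco : ‖x₁ + y‖ = ‖((x₁ + y : ↥Y) : X)‖ := (Submodule.coe_norm (x₁ + y)).symm
      rw [hco, Submodule.coe_add]
      exact hsum
    have hfinal : 2 - ε ≤ (1 - δ) * (2 - δ) - δ := by nlinarith
    linarith
end

section
/- Let X be a Banach space, E ⊆ X a finite-dimensional subspace, Y ⊆ X a closed subspace, δ ∈ (0,1), and T: E → Y a bounded linear map with ‖T‖ ≤ 1 + δ and ‖(Id − T)|_{E∩Y}‖ ≤ δ', where δ' ≤ δ/(dim E) suitably. Let P: E → E be a projection onto E ∩ Y with ‖P‖ ≤ dim E, and define S = P + T(Id − P): E → Y. Then Sx = x for all x ∈ E ∩ Y, and ‖Sx − Tx‖ ≤ δ'·(dim E)·‖x‖ for all x ∈ E; consequently, if T is a (1+δ)-isomorphic embedding and δ'·dim E ≤ ε/2 with δ ≤ min{ε/2, (ε/2)·(1−ε)/(1+ε)} and ε < 1, then S is a (1+ε)-isomorphic embedding. -/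
/-- The correction `S = P + T(Id − P)` of a `(1+δ)`-embedding `T : E → Y` which almost fixes
`E ∩ Y`: `S` fixes `E ∩ Y` pointwise, `‖Sx − Tx‖ ≤ δ'·(dim E)·‖x‖`, and if `T` is a
`(1+δ)`-isomorphic embedding with `δ'·dim E ≤ ε/2` and
`δ ≤ min{ε/2, (ε/2)·(1−ε)/(1+ε)}`, `ε < 1`, then `S` is a `(1+ε)`-isomorphic embedding
into `Y`. -/
theorem correction_embedding {X : Type*} [NormedAddCommGroup X] [NormedSpace ℝ X]
    [CompleteSpace X] (Y E : Submodule ℝ X) (hY : IsClosed (Y : Set X))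
    [FiniteDimensional ℝ E]
    (δ δ' ε : ℝ) (hδ : 0 < δ) (hδ1 : δ < 1) (hδ' : 0 ≤ δ') (hε : 0 < ε) (hε1 : ε < 1)
    (T : E →L[ℝ] X) (hTY : ∀ x : E, T x ∈ Y)
    (hTnorm : ∀ x : E, ‖T x‖ ≤ (1 + δ) * ‖x‖)
    (hTfix : ∀ x : E, (x : X) ∈ Y → ‖(x : X) - T x‖ ≤ δ' * ‖x‖)
    (P : E →L[ℝ] E)
    (hPY : ∀ x : E, ((P x : E) : X) ∈ Y)
    (hPfix : ∀ x : E, (x : X) ∈ Y → P x = x)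
    (hPnorm : ∀ x : E, ‖P x‖ ≤ (Module.finrank ℝ E : ℝ) * ‖x‖) :
    (∀ x : E, (x : X) ∈ Y → ((P x : X) + T (x - P x)) = (x : X)) ∧
    (∀ x : E, ‖((P x : X) + T (x - P x)) - T x‖ ≤ δ' * (Module.finrank ℝ E : ℝ) * ‖x‖) ∧
    ((∀ x : E, (1 + δ)⁻¹ * ‖x‖ ≤ ‖T x‖) →
      δ' * (Module.finrank ℝ E : ℝ) ≤ ε / 2 →
      δ ≤ min (ε / 2) (ε / 2 * ((1 - ε) / (1 + ε))) →
      ∀ x : E, ((P x : X) + T (x - P x)) ∈ Y ∧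
        (1 + ε)⁻¹ * ‖x‖ ≤ ‖(P x : X) + T (x - P x)‖ ∧
        ‖(P x : X) + T (x - P x)‖ ≤ (1 + ε) * ‖x‖) := by
  -- key: S x - T x = P x - T (P x)
  have hdiff : ∀ x : E, ((P x : X) + T (x - P x)) - T x = (P x : X) - T (P x) := by
    intro x
    rw [map_sub]
    abel
  have hn : (0:ℝ) ≤ (Module.finrank ℝ E : ℝ) := Nat.cast_nonneg _
  have key2 : ∀ x : E, ‖((P x : X) + T (x - P x)) - T x‖
      ≤ δ' * (Module.finrank ℝ E : ℝ) * ‖x‖ := by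
    intro x
    rw [hdiff x]
    calc ‖(P x : X) - T (P x)‖ ≤ δ' * ‖P x‖ := hTfix (P x) (hPY x)
      _ ≤ δ' * ((Module.finrank ℝ E : ℝ) * ‖x‖) :=
        mul_le_mul_of_nonneg_left (hPnorm x) hδ'
      _ = δ' * (Module.finrank ℝ E : ℝ) * ‖x‖ := by ring
  refine ⟨?_, key2, ?_⟩
  · intro x hx
    rw [hPfix x hx, sub_self, map_zero, add_zero]
  · intro hlow hδ'n hδmin x
    have hδ2 : δ ≤ ε / 2 := hδmin.trans (min_le_left _ _)
    have hδ3 : δ ≤ ε / 2 * ((1 - ε) / (1 + ε)) := hδmin.trans (min_le_right _ _)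
    have hST : ‖((P x : X) + T (x - P x)) - T x‖ ≤ ε / 2 * ‖x‖ := by
      calc ‖((P x : X) + T (x - P x)) - T x‖ ≤ δ' * (Module.finrank ℝ E : ℝ) * ‖x‖ := key2 x
        _ ≤ ε / 2 * ‖x‖ := mul_le_mul_of_nonneg_right hδ'n (norm_nonneg x)
    refine ⟨Y.add_mem (hPY x) (hTY _), ?_, ?_⟩
    · -- lower bound
      have h1 : ‖T x‖ - ‖((P x : X) + T (x - P x)) - T x‖ ≤ ‖(P x : X) + T (x - P x)‖ := by
        have := norm_sub_norm_le (T x) ((P x : X) + T (x - P x))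
        have h2 : T x - ((P x : X) + T (x - P x)) = -((((P x : X) + T (x - P x)) - T x)) := by abel
        rw [h2, norm_neg] at this
        linarith
      have hkey : (1 + ε)⁻¹ ≤ (1 + δ)⁻¹ - ε / 2 := by
        rw [inv_le_iff_one_le_mul₀ (by linarith)]
        have hδε : δ * (1 + ε) ≤ ε / 2 * (1 - ε) := by
          have h1ε : (0:ℝ) < 1 + ε := by linarith
          calc δ * (1 + ε) ≤ ε / 2 * ((1 - ε) / (1 + ε)) * (1 + ε) :=
            mul_le_mul_of_nonneg_right hδ3 (by linarith)
            _ = ε / 2 * (1 - ε) := by field_simp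
        have hδpos : (0:ℝ) < 1 + δ := by linarith
        have hinv : (1 + δ)⁻¹ * (1 + δ) = 1 := inv_mul_cancel₀ (ne_of_gt hδpos)
        have : ((1 + δ)⁻¹ - ε / 2) * (1 + ε) * (1 + δ) = (1 + ε) - (ε/2 * (1+ε) + ε/2 * δ * (1+ε)) := by
          field_simp
        nlinarith [mul_pos hδpos (show (0:ℝ) < 1 + ε by linarith), hδε,
          sq_nonneg (1 - ε), mul_le_mul_of_nonneg_left hδε (by linarith : (0:ℝ) ≤ ε / 2)]
      calc (1 + ε)⁻¹ * ‖x‖ ≤ ((1 + δ)⁻¹ - ε / 2) * ‖x‖ :=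
            mul_le_mul_of_nonneg_right hkey (norm_nonneg x)
        _ = (1 + δ)⁻¹ * ‖x‖ - ε / 2 * ‖x‖ := by ring
        _ ≤ ‖T x‖ - ‖((P x : X) + T (x - P x)) - T x‖ := by
            have := hlow x
            linarith [hST]
        _ ≤ ‖(P x : X) + T (x - P x)‖ := h1
    · calc ‖(P x : X) + T (x - P x)‖
          = ‖T x + (((P x : X) + T (x - P x)) - T x)‖ := by abel_nf
        _ ≤ ‖T x‖ + ‖((P x : X) + T (x - P x)) - T x‖ := norm_add_le _ _
        _ ≤ (1 + δ) * ‖x‖ + ε / 2 * ‖x‖ := add_le_add (hTnorm x) hST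
        _ ≤ (1 + ε) * ‖x‖ := by nlinarith [norm_nonneg x]
end
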